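/- Let Cᵏᵢⱼ (i,j,k ∈ {1,2,3}) be real constants with Cᵏᵢⱼ = −Cᵏⱼᵢ satisfying the Jacobi identity Σₗ (Cˡᵢⱼ Cᵐₖₗ + Cˡₖᵢ Cᵐⱼₗ + Cˡⱼₖ Cᵐᵢₗ) = 0 for all i,j,k,m. Let g : ℝ → (3×3 real matrices), E : ℝ → ℝ³ be functions and F : ℝ → (3×3 real matrices) be differentiable with F'ᵢⱼ(t) = Σₖₗ Cᵏᵢⱼ gₖₗ(t) Eˡ(t) for all t. Then the quantity A_{ijk}(t) = Σₗ (Cˡᵢⱼ F_{kl}(t) + Cˡₖᵢ F_{jl}(t) + Cˡⱼₖ F_{il}(t)) is constant in t. -/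

import Mathlib

/-- Part (2.9) of Lemma 2.2: if the structure constants `Cᵏᵢⱼ` are antisymmetric and
satisfy the Jacobi identity, and `F` satisfies the Maxwell evolution equation
`Ḟᵢⱼ = Σₖₗ Cᵏᵢⱼ gₖₗ Eˡ`, then the closedness constraint quantity
`A_{ijk} = Σₗ (Cˡᵢⱼ F_{kl} + Cˡₖᵢ F_{jl} + Cˡⱼₖ F_{il})` is constant in `t`. -/
theorem stmt_18 (C : Fin 3 → Fin 3 → Fin 3 → ℝ)
    (hanti : ∀ k i j, C k i j = -C k j i)
    (hjacobi : ∀ i j k m,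
      ∑ l, (C l i j * C m k l + C l k i * C m j l + C l j k * C m i l) = 0)
    (g : ℝ → Matrix (Fin 3) (Fin 3) ℝ) (E : ℝ → Fin 3 → ℝ)
    (F : ℝ → Matrix (Fin 3) (Fin 3) ℝ)
    (hF : ∀ t i j,
      HasDerivAt (fun s => F s i j) (∑ k, ∑ l, C k i j * g t k l * E t l) t) :
    ∀ (i j k : Fin 3) (t : ℝ),
      ∑ l, (C l i j * F t k l + C l k i * F t j l + C l j k * F t i l) =
      ∑ l, (C l i j * F 0 k l + C l k i * F 0 j l + C l j k * F 0 i l) := by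
  intro i j k t
  have key : ∀ s : ℝ, HasDerivAt
      (fun u => ∑ l, (C l i j * F u k l + C l k i * F u j l + C l j k * F u i l))
      0 s := by
    intro s
    have h : HasDerivAt
        (fun u => ∑ l, (C l i j * F u k l + C l k i * F u j l + C l j k * F u i l))
        (∑ l, (C l i j * (∑ m, ∑ n, C m k l * g s m n * E s n)
          + C l k i * (∑ m, ∑ n, C m j l * g s m n * E s n)
          + C l j k * (∑ m, ∑ n, C m i l * g s m n * E s n))) s := by
      apply HasDerivAt.fun_sum
      intro l _
      exact (((hF s k l).const_mul _).add ((hF s j l).const_mul _)).add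
        ((hF s i l).const_mul _)
    convert h using 1
    have : ∀ (a b : Fin 3),
        ∑ l, (C l i j * (C a k l * g s a b * E s b)
          + C l k i * (C a j l * g s a b * E s b)
          + C l j k * (C a i l * g s a b * E s b)) = 0 := by
      intro a b
      have := hjacobi i j k a
      have h2 : ∑ l, (C l i j * (C a k l * g s a b * E s b)
          + C l k i * (C a j l * g s a b * E s b)
          + C l j k * (C a i l * g s a b * E s b))
          = (∑ l, (C l i j * C a k l + C l k i * C a j l + C l j k * C a i l))
            * (g s a b * E s b) := by
        rw [Finset.sum_mul]
        apply Finset.sum_congr rfl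
        intro l _
        ring
      rw [h2, this, zero_mul]
    rw [eq_comm]
    calc ∑ l, (C l i j * (∑ m, ∑ n, C m k l * g s m n * E s n)
          + C l k i * (∑ m, ∑ n, C m j l * g s m n * E s n)
          + C l j k * (∑ m, ∑ n, C m i l * g s m n * E s n))
        = ∑ m, ∑ n, ∑ l, (C l i j * (C m k l * g s m n * E s n)
          + C l k i * (C m j l * g s m n * E s n)
          + C l j k * (C m i l * g s m n * E s n)) := by
          have swap3 : ∀ f : Fin 3 → Fin 3 → Fin 3 → ℝ,
              ∑ l, ∑ m, ∑ n, f l m n = ∑ m, ∑ n, ∑ l, f l m n := by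
            intro f
            rw [Finset.sum_comm]
            exact Finset.sum_congr rfl fun m _ => Finset.sum_comm
          rw [← swap3]
          apply Finset.sum_congr rfl; intro l _
          simp only [Finset.mul_sum, Finset.sum_add_distrib]
      _ = 0 := by
          simp only [this, Finset.sum_const_zero]
  have := fun s : ℝ => (key s)
  have hconst := is_const_of_deriv_eq_zero (f := fun u =>
      ∑ l, (C l i j * F u k l + C l k i * F u j l + C l j k * F u i l))
    (fun x => (key x).differentiableAt) (fun x => (key x).deriv) t 0
  exact hconst
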